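/- For a prime p and natural numbers k and s, the sum over all tuples (r_1,...,r_{p-1}) of nonnegative integers with r_1+...+r_{p-1} = (p-1)s of the product C(k,r_1)···C(k,r_{p-1})·1^{r_1}·2^{r_2}···(p-1)^{r_{p-1}} is congruent to (-1)^s·C(k,s) mod p. -/

import Mathlib

open Polynomial Finset

variable {p : ℕ} [Fact p.Prime]

lemma prod_X_sub_C_univ : ∏ a : ZMod p, (X - C a) = X ^ p - X := by
  have hp := (Fact.out : p.Prime)
  have hcard : Fintype.card (ZMod p) = p := ZMod.card p
  have hmon : (X ^ p - X : (ZMod p)[X]).Monic := by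
    apply monic_X_pow_sub
    simpa using (Nat.one_lt_cast.mpr hp.one_lt : (1 : WithBot ℕ) < p)
  have hroots : (X ^ p - X : (ZMod p)[X]).roots = Finset.univ.val := by
    have := FiniteField.roots_X_pow_card_sub_X (ZMod p)
    rwa [hcard] at this
  have hdeg : (X ^ p - X : (ZMod p)[X]).natDegree = p :=
    FiniteField.X_pow_card_sub_X_natDegree_eq _ hp.one_lt
  have hc : Multiset.card (X ^ p - X : (ZMod p)[X]).roots
      = (X ^ p - X : (ZMod p)[X]).natDegree := by
    rw [hroots, hdeg]; simpa using hcard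
  have := C_leadingCoeff_mul_prod_multiset_X_sub_C hc
  rw [hmon.leadingCoeff, map_one, one_mul, hroots] at this
  rw [Finset.prod_eq_multiset_prod]
  exact this

lemma prod_X_sub_C_erase :
    ∏ a ∈ (univ : Finset (ZMod p)).erase 0, (X - C a) = X ^ (p - 1) - 1 := by
  have hp := (Fact.out : p.Prime)
  have h0 : (0 : ZMod p) ∈ (univ : Finset (ZMod p)) := mem_univ _
  have key : X * ∏ a ∈ (univ : Finset (ZMod p)).erase 0, (X - C a)
      = X * (X ^ (p - 1) - 1) := by
    have := prod_X_sub_C_univ (p := p)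
    rw [← Finset.prod_erase_mul _ _ h0] at this
    rw [mul_comm]
    rw [map_zero, sub_zero] at this
    rw [this, mul_sub, mul_one, ← pow_succ', Nat.sub_add_cancel hp.one_le]
  exact mul_left_cancel₀ X_ne_zero key

lemma prod_erase_eq_neg_one :
    ∏ a ∈ (univ : Finset (ZMod p)).erase 0, a = -1 := by
  have hp := (Fact.out : p.Prime)
  have h := congrArg (eval 0) (prod_X_sub_C_erase (p := p))
  simp only [eval_prod, eval_sub, eval_X, eval_C, eval_pow, eval_one, zero_sub,
    zero_pow (Nat.sub_ne_zero_of_lt hp.one_lt)] at h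
  have hneg : ∏ a ∈ (univ : Finset (ZMod p)).erase 0, (-a)
      = ∏ a ∈ (univ : Finset (ZMod p)).erase 0, a := by
    apply Finset.prod_nbij' (fun a => -a) (fun a => -a) <;>
      simp [Finset.mem_erase, neg_eq_zero]
  rw [hneg] at h
  simpa using h

lemma prod_one_add_C_mul_X :
    ∏ a ∈ (univ : Finset (ZMod p)).erase 0, (1 + C a * X) = 1 - X ^ (p - 1) := by
  have step1 : ∏ a ∈ (univ : Finset (ZMod p)).erase 0, (1 + C a * X)
      = ∏ a ∈ (univ : Finset (ZMod p)).erase 0, (C a * (X + C a⁻¹)) := by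
    apply Finset.prod_congr rfl
    intro a ha
    have ha0 : a ≠ 0 := (Finset.mem_erase.mp ha).1
    rw [mul_add, ← map_mul, mul_inv_cancel₀ ha0, map_one]
    ring
  rw [step1, Finset.prod_mul_distrib, ← map_prod, prod_erase_eq_neg_one]
  have step2 : ∏ a ∈ (univ : Finset (ZMod p)).erase 0, (X + C a⁻¹)
      = ∏ a ∈ (univ : Finset (ZMod p)).erase 0, (X + C a) := by
    apply Finset.prod_nbij' (fun a => a⁻¹) (fun a => a⁻¹) <;>
      simp [Finset.mem_erase, inv_eq_zero]
  have step3 : ∏ a ∈ (univ : Finset (ZMod p)).erase 0, (X + C a)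
      = ∏ a ∈ (univ : Finset (ZMod p)).erase 0, (X - C a) := by
    apply Finset.prod_nbij' (fun a => -a) (fun a => -a) <;>
      simp [Finset.mem_erase, neg_eq_zero, sub_neg_eq_add]
  rw [step2, step3, prod_X_sub_C_erase]
  rw [map_neg, map_one]
  ring

lemma prod_fin_one_add :
    ∏ i : Fin (p - 1), (1 + C (((i : ℕ) : ZMod p) + 1) * X) = 1 - X ^ (p - 1) := by
  have hp := (Fact.out : p.Prime)
  rw [← prod_one_add_C_mul_X]
  apply Finset.prod_nbij' (fun i : Fin (p - 1) => (((i : ℕ) + 1 : ℕ) : ZMod p))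
    (fun a : ZMod p => (⟨a.val - 1, by have := ZMod.val_lt a; have := hp.two_le; omega⟩ :
      Fin (p - 1)))
  · intro i _
    have hlt : (i : ℕ) + 1 < p := by have := i.is_lt; omega
    refine Finset.mem_erase.mpr ⟨?_, mem_univ _⟩
    intro h
    have := ZMod.val_cast_of_lt hlt
    rw [h, ZMod.val_zero] at this
    omega
  · intro a _; exact mem_univ _
  · intro i _
    have hlt : (i : ℕ) + 1 < p := by have := i.is_lt; omega
    have he : (((i : ℕ) : ZMod p) + 1) = (((i : ℕ) + 1 : ℕ) : ZMod p) := by push_cast; ring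
    have hv := ZMod.val_cast_of_lt (n := p) hlt
    ext
    simp only [he, hv]
    omega
  · intro a ha
    have ha0 : a ≠ 0 := (Finset.mem_erase.mp ha).1
    have hv : a.val ≠ 0 := fun h => ha0 ((ZMod.val_eq_zero a).mp h)
    simp only
    rw [Nat.sub_add_cancel (Nat.one_le_iff_ne_zero.mpr hv)]
    exact ZMod.natCast_rightInverse a
  · intro i _
    push_cast
    ring

lemma coeff_one_add_pow {R : Type*} [CommRing R] (a : R) (k m : ℕ) :
    PowerSeries.coeff (R := R) m ((1 + PowerSeries.C (R := R) a * PowerSeries.X) ^ k)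
      = (k.choose m : R) * a ^ m := by
  rw [add_comm, add_pow, map_sum, Finset.sum_eq_single m]
  · rw [one_pow, mul_one, mul_pow, ← map_pow, mul_comm,
      ← map_natCast (PowerSeries.C (R := R)) (k.choose m), ← mul_assoc, ← map_mul,
      PowerSeries.coeff_C_mul, PowerSeries.coeff_X_pow, if_pos rfl]
    ring
  · intro j _ hj
    rw [one_pow, mul_one, mul_pow, ← map_pow, mul_comm,
      ← map_natCast (PowerSeries.C (R := R)) (k.choose j), ← mul_assoc, ← map_mul,
      PowerSeries.coeff_C_mul, PowerSeries.coeff_X_pow, if_neg (Ne.symm hj), mul_zero]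
  · intro hm
    have : k < m := by simpa using hm
    simp [Nat.choose_eq_zero_of_lt this]

lemma coeff_one_sub_X_pow {R : Type*} [CommRing R] (n k s : ℕ) (hn : n ≠ 0) :
    PowerSeries.coeff (R := R) (n * s) ((1 - PowerSeries.X ^ n) ^ k)
      = (-1) ^ s * (k.choose s : R) := by
  rw [sub_eq_add_neg, add_comm, add_pow, map_sum, Finset.sum_eq_single s]
  · rw [one_pow, mul_one, neg_pow, ← pow_mul, mul_right_comm,
      ← map_natCast (PowerSeries.C (R := R)) (k.choose s),
      show ((-1 : PowerSeries R) ^ s) = PowerSeries.C (R := R) ((-1) ^ s) by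
        rw [map_pow, map_neg, map_one],
      ← map_mul, PowerSeries.coeff_C_mul, PowerSeries.coeff_X_pow, if_pos rfl]
    ring
  · intro j _ hj
    rw [one_pow, mul_one, neg_pow, ← pow_mul, mul_right_comm,
      ← map_natCast (PowerSeries.C (R := R)) (k.choose j),
      show ((-1 : PowerSeries R) ^ j) = PowerSeries.C (R := R) ((-1) ^ j) by
        rw [map_pow, map_neg, map_one],
      ← map_mul, PowerSeries.coeff_C_mul, PowerSeries.coeff_X_pow,
      if_neg (by exact fun h => hj (Nat.eq_of_mul_eq_mul_left (Nat.pos_of_ne_zero hn) h).symm),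
      mul_zero]
  · intro hs
    have : k < s := by simpa using hs
    simp [Nat.choose_eq_zero_of_lt this]

lemma sum_tuple_eq_finsupp {R : Type*} [CommSemiring R] (n N : ℕ) (G : Fin n → ℕ → R) :
    ∑ r ∈ Finset.Nat.antidiagonalTuple n N, ∏ i, G i (r i)
      = ∑ l ∈ Finset.finsuppAntidiag (univ : Finset (Fin n)) N, ∏ i, G i (l i) := by
  apply Finset.sum_nbij' (fun r => Finsupp.equivFunOnFinite.symm r) (fun l => ⇑l)
  · intro r hr
    rw [Finset.Nat.mem_antidiagonalTuple] at hr
    rw [Finset.mem_finsuppAntidiag]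
    constructor
    · simpa using hr
    · exact Finset.subset_univ _
  · intro l hl
    rw [Finset.mem_finsuppAntidiag] at hl
    rw [Finset.Nat.mem_antidiagonalTuple]
    simpa using hl.1
  · intro r _
    exact Finsupp.equivFunOnFinite.apply_symm_apply r
  · intro l _
    exact Finsupp.equivFunOnFinite.symm_apply_apply l
  · intro r _
    apply Finset.prod_congr rfl
    intro i _
    simp

/-- For a prime `p` and `k s : ℕ`, the sum over all tuples `(r_1,…,r_{p-1})`
of nonnegative integers with `Σ r_i = (p-1)s` of
`C(k,r_1)···C(k,r_{p-1})·1^{r_1}·2^{r_2}···(p-1)^{r_{p-1}}`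
is congruent to `(-1)^s·C(k,s)` mod `p`. -/
theorem weighted_binomial_sum_eq_choose (p k s : ℕ) (hp : p.Prime) :
    ((∑ r ∈ Finset.Nat.antidiagonalTuple (p - 1) ((p - 1) * s),
      ∏ i : Fin (p - 1), (k.choose (r i) : ℤ) * ((i : ℕ) + 1) ^ (r i) : ℤ) : ZMod p)
      = (-1) ^ s * (k.choose s : ZMod p) := by
  haveI : Fact p.Prime := ⟨hp⟩
  have hn : p - 1 ≠ 0 := Nat.sub_ne_zero_of_lt hp.one_lt
  push_cast
  have h1 : ∑ r ∈ Finset.Nat.antidiagonalTuple (p - 1) ((p - 1) * s),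
      ∏ i : Fin (p - 1), ((k.choose (r i) : ZMod p) * (((i : ℕ) : ZMod p) + 1) ^ (r i))
      = ∑ r ∈ Finset.Nat.antidiagonalTuple (p - 1) ((p - 1) * s),
        ∏ i : Fin (p - 1), PowerSeries.coeff (R := ZMod p) (r i)
          ((1 + PowerSeries.C (R := ZMod p) (((i : ℕ) : ZMod p) + 1) * PowerSeries.X) ^ k) := by
    refine Finset.sum_congr rfl fun r _ => Finset.prod_congr rfl fun i _ => ?_
    exact (coeff_one_add_pow _ k (r i)).symm
  rw [h1, sum_tuple_eq_finsupp (p - 1) ((p - 1) * s)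
    (fun i m => PowerSeries.coeff (R := ZMod p) m
      ((1 + PowerSeries.C (R := ZMod p) (((i : ℕ) : ZMod p) + 1) * PowerSeries.X) ^ k)),
    ← PowerSeries.coeff_prod]
  have hprod : ∏ i : Fin (p - 1),
      (1 + PowerSeries.C (R := ZMod p) (((i : ℕ) : ZMod p) + 1) * PowerSeries.X) ^ k
      = (1 - PowerSeries.X ^ (p - 1)) ^ k := by
    rw [Finset.prod_pow]
    congr 1
    have hcoe : ((∏ i : Fin (p - 1), (1 + C (((i : ℕ) : ZMod p) + 1) * X) : (ZMod p)[X]) :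
        PowerSeries (ZMod p))
        = ∏ i : Fin (p - 1),
            (1 + PowerSeries.C (R := ZMod p) (((i : ℕ) : ZMod p) + 1) * PowerSeries.X) := by
      rw [← Polynomial.coeToPowerSeries.ringHom_apply, map_prod]
      refine Finset.prod_congr rfl fun i _ => ?_
      simp only [Polynomial.coeToPowerSeries.ringHom_apply, Polynomial.coe_add,
        Polynomial.coe_mul, Polynomial.coe_C, Polynomial.coe_X, Polynomial.coe_one]
    rw [← hcoe, prod_fin_one_add]
    rw [Polynomial.coe_sub, Polynomial.coe_pow, Polynomial.coe_one, Polynomial.coe_X]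
  rw [hprod]
  exact coeff_one_sub_X_pow (p - 1) k s hn
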